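/- Let k be a field of characteristic 0, let R = k[X_1,...,X_r] act on D = k[x_1,...,x_r] by differentiation, and let A = R/I be a level algebra of socle degree j. If f ∈ D_j satisfies I_j * f = 0, then I * f = 0. -/

import Mathlib

/-- The iterated partial derivative operator `∂^E` associated to a
multi-index `E`. -/
noncomputable def pdPow {k : Type*} [CommSemiring k] {r : ℕ} (E : Fin r →₀ ℕ) :
    MvPolynomial (Fin r) k →ₗ[k] MvPolynomial (Fin r) k :=
  ((List.finRange r).map fun i =>
    ((MvPolynomial.pderiv i :
        Derivation k (MvPolynomial (Fin r) k) (MvPolynomial (Fin r) k)).toLinearMap) ^ (E i)).prod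

/-- The action `F * f` of a polynomial `F` on a polynomial `f` by letting each
variable `X i` of `F` act as `∂/∂x i`. -/
noncomputable def act {k : Type*} [CommSemiring k] {r : ℕ}
    (F f : MvPolynomial (Fin r) k) : MvPolynomial (Fin r) k :=
  ∑ E ∈ F.support, F.coeff E • (pdPow E) f

open MvPolynomial Finsupp

section Aux

variable {k : Type*} [CommSemiring k] {r : ℕ}

local notation "P" => MvPolynomial (Fin r) k

lemma degree_eq_sum_univ (d : Fin r →₀ ℕ) : d.degree = ∑ i, d i := by
  rw [Finsupp.degree]
  exact Finset.sum_subset (Finset.subset_univ _)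
    (by simp +contextual [Finsupp.notMem_support_iff])

lemma pderiv_pow_monomial (i : Fin r) (n : ℕ) (s : Fin r →₀ ℕ) (a : k) :
    (((pderiv i : Derivation k P P).toLinearMap) ^ n) (monomial s a)
      = monomial (s - single i n) (a * (s i).descFactorial n) := by
  induction n with
  | zero => simp
  | succ n ih =>
    rw [pow_succ', Module.End.mul_apply, ih]
    rw [Derivation.coeFn_coe, pderiv_monomial]
    have h1 : (s - single i n) i = s i - n := by simp
    have h2 : s - single i n - single i 1 = s - single i (n + 1) := by
      rw [tsub_tsub, ← Finsupp.single_add]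
    rw [h1, h2, Nat.descFactorial_succ]
    push_cast
    ring_nf

lemma list_sum_single_apply_of_not_mem (E : Fin r →₀ ℕ) (i : Fin r) :
    ∀ (l : List (Fin r)), i ∉ l → ((l.map fun i' => single i' (E i')).sum) i = 0 := by
  intro l
  induction l with
  | nil => simp
  | cons a l ih =>
    intro hi
    simp only [List.map_cons, List.sum_cons, Finsupp.add_apply]
    rw [ih (fun h => hi (List.mem_cons_of_mem _ h)),
      Finsupp.single_eq_of_ne (fun h => hi (by rw [← h]; exact List.mem_cons_self))]

lemma pdPow_monomial_aux (E : Fin r →₀ ℕ) :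
    ∀ (l : List (Fin r)), l.Nodup → ∀ (s : Fin r →₀ ℕ) (a : k),
    ((l.map fun i =>
        ((pderiv i : Derivation k P P).toLinearMap) ^ (E i)).prod) (monomial s a)
      = monomial (s - (l.map fun i' => single i' (E i')).sum)
          (a * ((l.map fun i => ((s i).descFactorial (E i) : k)).prod)) := by
  intro l
  induction l with
  | nil => simp
  | cons i l ih =>
    intro hnd s a
    have hi : i ∉ l := (List.nodup_cons.mp hnd).1
    simp only [List.map_cons, List.prod_cons, List.sum_cons, Module.End.mul_apply]
    rw [ih (List.nodup_cons.mp hnd).2, pderiv_pow_monomial]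
    have h1 : (s - (l.map fun i' => single i' (E i')).sum) i = s i := by
      simp [list_sum_single_apply_of_not_mem E i l hi]
    have h2 : s - (l.map fun i' => single i' (E i')).sum - single i (E i)
        = s - (single i (E i) + (l.map fun i' => single i' (E i')).sum) := by
      rw [tsub_tsub, add_comm]
    rw [h1, h2]
    ring_nf

lemma pdPow_monomial (E s : Fin r →₀ ℕ) (a : k) :
    pdPow E (monomial s a)
      = monomial (s - E) (a * ∏ i, ((s i).descFactorial (E i) : k)) := by
  have h := pdPow_monomial_aux (k := k) E (List.finRange r) (List.nodup_finRange r) s a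
  have h1 : ((List.finRange r).map fun i' => single i' (E i')).sum = E := by
    rw [← Fin.sum_univ_def (fun i' => single i' (E i'))]
    exact Finsupp.univ_sum_single E
  have h2 : ((List.finRange r).map fun i => ((s i).descFactorial (E i) : k)).prod
      = ∏ i, ((s i).descFactorial (E i) : k) := (Fin.prod_univ_def _).symm
  rw [pdPow, h, h1, h2]

lemma descFactorial_add_eq (n m b : ℕ) :
    n.descFactorial (m + b) = n.descFactorial m * (n - m).descFactorial b := by
  induction b with
  | zero => simp
  | succ b ih =>
    rw [← add_assoc, Nat.descFactorial_succ, ih, Nat.descFactorial_succ, Nat.sub_sub]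
    ring

lemma pdPow_add_apply (E E' : Fin r →₀ ℕ) (f : P) :
    pdPow (E + E') f = pdPow E (pdPow E' f) := by
  have key : ∀ (s : Fin r →₀ ℕ) (a : k),
      pdPow (E + E') (monomial s a) = pdPow E (pdPow E' (monomial s a)) := by
    intro s a
    rw [pdPow_monomial, pdPow_monomial, pdPow_monomial]
    have h1 : s - E' - E = s - (E + E') := by rw [tsub_tsub, add_comm]
    have hp : (∏ i, (((s i).descFactorial ((E + E') i)) : k))
        = (∏ i, (((s i).descFactorial (E' i)) : k))
          * ∏ i, ((((s - E') i).descFactorial (E i)) : k) := by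
      rw [← Finset.prod_mul_distrib]
      refine Finset.prod_congr rfl fun i _ => ?_
      rw [Finsupp.add_apply, ← Nat.cast_mul]
      congr 1
      have hsi : (s - E') i = s i - E' i := by simp
      rw [hsi, add_comm, descFactorial_add_eq]
    rw [h1, hp, mul_assoc]
  conv_lhs => rw [f.as_sum]
  conv_rhs => rw [f.as_sum]
  rw [map_sum, map_sum, map_sum]
  exact Finset.sum_congr rfl fun s _ => key s _

lemma act_add (F G f : P) : act (F + G) f = act F f + act G f := by
  show Finsupp.sum (AddMonoidAlgebra.coeff (F + G)) (fun E c => c • pdPow E f) = _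
  exact Finsupp.sum_add_index' (by simp) (fun a b₁ b₂ => add_smul _ _ _)

lemma act_zero (f : P) : act 0 f = 0 := by simp [act]

lemma act_monomial (E : Fin r →₀ ℕ) (c : k) (f : P) :
    act (monomial E c) f = c • pdPow E f := by
  show Finsupp.sum (AddMonoidAlgebra.coeff (monomial E c)) (fun E c => c • pdPow E f) = _
  exact Finsupp.sum_single_index (by simp)

lemma act_monomial_mul (E' : Fin r →₀ ℕ) (c : k) (F f : P) :
    act (monomial E' c * F) f = c • pdPow E' (act F f) := by
  induction F using MvPolynomial.induction_on' with
  | monomial E a =>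
    rw [monomial_mul, act_monomial, act_monomial, pdPow_add_apply, map_smul,
      smul_smul]
  | add p q hp hq =>
    rw [mul_add, act_add, act_add, hp, hq, map_add, smul_add]

lemma exists_lt_of_degree_lt {s E : Fin r →₀ ℕ} (h : s.degree < E.degree) :
    ∃ i, s i < E i := by
  by_contra hc
  push_neg at hc
  rw [degree_eq_sum_univ, degree_eq_sum_univ] at h
  exact absurd (Finset.sum_le_sum fun i _ => hc i) (not_le.mpr h)

lemma pdPow_eq_zero_of_degree_lt {f : P} {n : ℕ} (hf : f.IsHomogeneous n)
    {E : Fin r →₀ ℕ} (hE : n < E.degree) : pdPow E f = 0 := by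
  conv_lhs => rw [f.as_sum]
  rw [map_sum]
  refine Finset.sum_eq_zero fun s hs => ?_
  rw [pdPow_monomial]
  have hsd : s.degree = n := by
    rw [degree_eq_weight_one]
    exact hf (MvPolynomial.mem_support_iff.mp hs)
  obtain ⟨i, hi⟩ := exists_lt_of_degree_lt (s := s) (E := E) (hsd ▸ hE)
  rw [Finset.prod_eq_zero (Finset.mem_univ i)
    (by rw [Nat.descFactorial_of_lt hi, Nat.cast_zero]), mul_zero, map_zero]

lemma pdPow_isHomogeneous {f : P} {n : ℕ} (hf : f.IsHomogeneous n)
    (E : Fin r →₀ ℕ) : (pdPow E f).IsHomogeneous (n - E.degree) := by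
  rw [← mem_homogeneousSubmodule]
  have hrw : pdPow E f = ∑ s ∈ f.support, pdPow E (monomial s (coeff s f)) := by
    conv_lhs => rw [f.as_sum]
    rw [map_sum]
  rw [hrw]
  refine Submodule.sum_mem _ fun s hs => ?_
  rw [pdPow_monomial, mem_homogeneousSubmodule]
  have hsd : s.degree = n := by
    rw [degree_eq_weight_one]
    exact hf (MvPolynomial.mem_support_iff.mp hs)
  by_cases hle : ∀ i, E i ≤ s i
  · refine isHomogeneous_monomial _ ?_
    rw [degree_eq_sum_univ]
    have : ∀ i, (s - E) i = s i - E i := by simp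
    simp_rw [this]
    rw [← hsd, degree_eq_sum_univ s, degree_eq_sum_univ E]
    exact Finset.sum_tsub_distrib Finset.univ (fun i _ => hle i)
  · push_neg at hle
    obtain ⟨i, hi⟩ := hle
    rw [Finset.prod_eq_zero (Finset.mem_univ i)
      (by rw [Nat.descFactorial_of_lt hi, Nat.cast_zero]), mul_zero, map_zero]
    exact isHomogeneous_zero _ _ _

lemma act_isHomogeneous {F f : P} {d n : ℕ} (hF : F.IsHomogeneous d)
    (hf : f.IsHomogeneous n) : (act F f).IsHomogeneous (n - d) := by
  rw [← mem_homogeneousSubmodule, act]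
  refine Submodule.sum_mem _ fun E hE => Submodule.smul_mem _ _ ?_
  rw [mem_homogeneousSubmodule]
  have : E.degree = d := by
    rw [degree_eq_weight_one]; exact hF (MvPolynomial.mem_support_iff.mp hE)
  exact this ▸ pdPow_isHomogeneous hf E

lemma eq_of_le_of_degree_eq {s t : Fin r →₀ ℕ} (hle : ∀ i, s i ≤ t i)
    (h : s.degree = t.degree) : s = t := by
  rw [degree_eq_sum_univ, degree_eq_sum_univ] at h
  ext i
  exact (Finset.sum_eq_sum_iff_of_le (fun i _ => hle i)).mp h i (Finset.mem_univ i)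

lemma pdPow_self_homogeneous {g : P} {e : ℕ} (hg : g.IsHomogeneous e)
    {s : Fin r →₀ ℕ} (hs : s.degree = e) :
    pdPow s g = MvPolynomial.C (coeff s g * ∏ i, ((s i).factorial : k)) := by
  conv_lhs => rw [g.as_sum]
  rw [map_sum]
  have key : ∀ t ∈ g.support, pdPow s (monomial t (coeff t g))
      = if t = s then MvPolynomial.C (coeff s g * ∏ i, ((s i).factorial : k)) else 0 := by
    intro t ht
    have htd : t.degree = e := by
      rw [degree_eq_weight_one]; exact hg (MvPolynomial.mem_support_iff.mp ht)
    rw [pdPow_monomial]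
    by_cases hts : t = s
    · subst hts
      rw [if_pos rfl, tsub_self, MvPolynomial.C_apply]
      simp_rw [Nat.descFactorial_self]
    · rw [if_neg hts]
      have : ∃ i, t i < s i := by
        by_contra hc
        push_neg at hc
        exact hts ((eq_of_le_of_degree_eq hc (by rw [hs, htd])).symm)
      obtain ⟨i, hi⟩ := this
      rw [Finset.prod_eq_zero (Finset.mem_univ i)
        (by rw [Nat.descFactorial_of_lt hi, Nat.cast_zero]), mul_zero, map_zero]
  rw [Finset.sum_congr rfl key]
  by_cases hmem : s ∈ g.support
  · rw [Finset.sum_ite_eq' g.support s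
      (fun _ => MvPolynomial.C (coeff s g * ∏ i, ((s i).factorial : k))), if_pos hmem]
  · rw [Finset.sum_ite_eq' g.support s
      (fun _ => MvPolynomial.C (coeff s g * ∏ i, ((s i).factorial : k))), if_neg hmem]
    rw [MvPolynomial.notMem_support_iff.mp hmem]
    simp

end Aux

section Pairing

variable {k : Type*} [Field k] [CharZero k] {r : ℕ}

lemma eq_zero_of_pdPow_eq_zero {g : MvPolynomial (Fin r) k} {e : ℕ}
    (hg : g.IsHomogeneous e)
    (h : ∀ s : Fin r →₀ ℕ, s.degree = e → pdPow s g = 0) : g = 0 := by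
  ext s
  rw [MvPolynomial.coeff_zero]
  by_cases hsd : s.degree = e
  · have := h s hsd
    rw [pdPow_self_homogeneous hg hsd] at this
    have h2 : coeff s g * ∏ i, ((s i).factorial : k) = 0 :=
      MvPolynomial.C_eq_zero.mp this
    have h3 : (∏ i, ((s i).factorial : k)) ≠ 0 :=
      Finset.prod_ne_zero_iff.mpr fun i _ =>
        Nat.cast_ne_zero.mpr (Nat.factorial_ne_zero _)
    exact (mul_eq_zero.mp h2).resolve_right h3
  · exact hg.coeff_eq_zero hsd

end Pairing


/-- For a level algebra `A = R/I` of socle degree `j`: if `f ∈ D_j` is killed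
by `I_j` under the differentiation action, then `f` is killed by all of `I`. -/
theorem statement_12 {k : Type*} [Field k] [CharZero k] (r j : ℕ)
    (I : Ideal (MvPolynomial (Fin r) k))
    (hhom : ∀ F ∈ I, ∀ d : ℕ, MvPolynomial.homogeneousComponent d F ∈ I)
    (hart : ∀ d : ℕ, j < d → ∀ F : MvPolynomial (Fin r) k,
      F.IsHomogeneous d → F ∈ I)
    (htop : ∃ F : MvPolynomial (Fin r) k, F.IsHomogeneous j ∧ F ∉ I)
    (hlevel : ∀ d < j, ∀ F : MvPolynomial (Fin r) k, F.IsHomogeneous d → F ∉ I →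
      ∃ G : MvPolynomial (Fin r) k, G.IsHomogeneous 1 ∧ G * F ∉ I)
    (f : MvPolynomial (Fin r) k) (hf : f.IsHomogeneous j)
    (hperp : ∀ F ∈ I, F.IsHomogeneous j → act F f = 0) :
    ∀ F ∈ I, act F f = 0 := by
  -- first: for homogeneous elements of I
  have hom_case : ∀ d : ℕ, ∀ F ∈ I, F.IsHomogeneous d → act F f = 0 := by
    intro d F hFI hFd
    rcases lt_trichotomy d j with hdj | rfl | hjd
    · -- d < j
      set g := act F f with hg
      have hgh : g.IsHomogeneous (j - d) := act_isHomogeneous hFd hf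
      refine eq_zero_of_pdPow_eq_zero hgh fun E' hE' => ?_
      have hGI : monomial E' (1 : k) * F ∈ I := I.mul_mem_left _ hFI
      have hGhom : (monomial E' (1 : k) * F).IsHomogeneous j := by
        have := (isHomogeneous_monomial (1 : k) hE').mul hFd
        rwa [Nat.sub_add_cancel hdj.le] at this
      have := hperp _ hGI hGhom
      rw [act_monomial_mul, one_smul] at this
      exact this
    · exact hperp F hFI hFd
    · -- j < d
      rw [act]
      refine Finset.sum_eq_zero fun E hE => ?_
      have hEd : E.degree = d := by
        rw [degree_eq_weight_one]; exact hFd (MvPolynomial.mem_support_iff.mp hE)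
      rw [pdPow_eq_zero_of_degree_lt hf (hEd ▸ hjd), smul_zero]
  intro F hFI
  have hsum : (∑ i ∈ Finset.range (F.totalDegree + 1),
      MvPolynomial.homogeneousComponent i F) = F := MvPolynomial.sum_homogeneousComponent F
  have hactsum : ∀ (s : Finset ℕ) (G : ℕ → MvPolynomial (Fin r) k),
      act (∑ i ∈ s, G i) f = ∑ i ∈ s, act (G i) f := by
    intro s G
    induction s using Finset.induction_on with
    | empty => simp [act_zero]
    | insert _ _ hn ih => rw [Finset.sum_insert hn, Finset.sum_insert hn, act_add, ih]
  calc act F f = act (∑ i ∈ Finset.range (F.totalDegree + 1),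
        MvPolynomial.homogeneousComponent i F) f := by rw [hsum]
    _ = ∑ i ∈ Finset.range (F.totalDegree + 1),
        act (MvPolynomial.homogeneousComponent i F) f := hactsum _ _
    _ = 0 := Finset.sum_eq_zero fun d _ =>
        hom_case d _ (hhom F hFI d) (MvPolynomial.homogeneousComponent_isHomogeneous d F)
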